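/- Let K₁, K₂ ⊆ ℝ² be nonempty compact convex sets, each containing the origin. If their Voronoi flowers with respect to the origin coincide, F₀(K₁) = F₀(K₂), then K₁ = K₂. (A convex body is uniquely determined by its Voronoi flower.) -/

import Mathlib

open Metric Real Set MeasureTheory
open scoped RealInnerProductSpace

noncomputable section

/-- The Euclidean plane. -/
abbrev E2 := EuclideanSpace ℝ (Fin 2)

/-- The unit vector `u_θ = (cos θ, sin θ)`. -/
def uvec (θ : ℝ) : E2 := (WithLp.equiv 2 (Fin 2 → ℝ)).symm ![Real.cos θ, Real.sin θ]

/-- The vector `v_θ = (−sin θ, cos θ)`. -/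
def vvec (θ : ℝ) : E2 := (WithLp.equiv 2 (Fin 2 → ℝ)).symm ![-Real.sin θ, Real.cos θ]

/-- The Voronoi flower of `L` with respect to `x`: the union over `s ∈ L` of the closed
balls admitting the segment `[x, s]` as a diameter. -/
def vflower (x : E2) (L : Set E2) : Set E2 :=
  ⋃ s ∈ L, closedBall ((2:ℝ)⁻¹ • (x + s)) (‖s - x‖ / 2)

/-- The support function of `L` with respect to `x`: `p_x(L, w) = sup_{s ∈ L} ⟨s − x, w⟩`. -/
def suppf (x : E2) (L : Set E2) (w : E2) : ℝ :=
  sSup ((fun s => ⟪s - x, w⟫) '' L)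

lemma mem_vflower {K : Set E2} {y : E2} :
    y ∈ vflower 0 K ↔ ∃ s ∈ K, ‖y‖^2 ≤ ⟪y, s⟫ := by
  simp only [vflower, mem_iUnion, mem_closedBall, exists_prop, zero_add, sub_zero]
  refine exists_congr fun s => and_congr_right fun _ => ?_
  rw [dist_eq_norm, show ‖s‖ / 2 = ‖(2:ℝ)⁻¹ • s‖ by
    rw [norm_smul]; simp [div_eq_inv_mul],
    ← pow_le_pow_iff_left₀ (norm_nonneg _) (norm_nonneg _) two_ne_zero,
    @norm_sub_sq_real]
  have h1 : ⟪y, (2:ℝ)⁻¹ • s⟫ = 2⁻¹ * ⟪y, s⟫ := real_inner_smul_right _ _ _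
  constructor <;> intro h <;> nlinarith [h1]

lemma key {K : Set E2} {w : E2} {c : ℝ} (hw : w ≠ 0) (hc : 0 < c) :
    (∃ s ∈ K, c ≤ ⟪w, s⟫) ↔ (c / ‖w‖^2) • w ∈ vflower 0 K := by
  rw [mem_vflower]
  have hw2 : (0:ℝ) < ‖w‖^2 := by
    have := norm_pos_iff.mpr hw; positivity
  refine exists_congr fun s => and_congr_right fun _ => ?_
  have h1 : ‖(c / ‖w‖^2) • w‖^2 = c^2 / ‖w‖^2 := by
    rw [norm_smul, mul_pow, Real.norm_eq_abs, sq_abs, div_pow]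
    field_simp
  have h2 : ⟪(c / ‖w‖^2) • w, s⟫ = (c / ‖w‖^2) * ⟪w, s⟫ := real_inner_smul_left _ _ _
  rw [h1, h2, div_mul_eq_mul_div, div_le_div_iff_of_pos_right hw2, sq, mul_le_mul_iff_right₀ hc]

lemma incl {K₁ K₂ : Set E2} (h₂c : IsCompact K₂) (h₂conv : Convex ℝ K₂)
    (h₂0 : (0:E2) ∈ K₂) (hF : vflower 0 K₁ = vflower 0 K₂) : K₁ ⊆ K₂ := by
  intro x hx
  by_contra hxK
  obtain ⟨f, u, hfb, hfx⟩ := geometric_hahn_banach_closed_point h₂conv h₂c.isClosed hxK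
  set w : E2 := (InnerProductSpace.toDual ℝ E2).symm f with hwdef
  have hfw : ∀ y, f y = ⟪w, y⟫ := fun y => by
    rw [hwdef]; simp [real_inner_comm]
  have hu0 : 0 < u := by have := hfb 0 h₂0; simpa using this
  have hc : 0 < f x := lt_trans hu0 hfx
  have hwne : w ≠ 0 := by
    intro h0
    rw [hfw x, h0] at hc; simp at hc
  have h1 : ∃ s ∈ K₁, f x ≤ ⟪w, s⟫ := ⟨x, hx, le_of_eq (hfw x)⟩
  rw [key hwne hc, hF, ← key hwne hc] at h1
  obtain ⟨s, hs, hle⟩ := h1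
  have := hfb s hs
  rw [hfw s] at this
  linarith [hfx]


/-- a convex body containing the origin is uniquely determined by its
Voronoi flower with respect to the origin. -/
theorem vflower_injective (K₁ K₂ : Set E2)
    (h₁ne : K₁.Nonempty) (h₁c : IsCompact K₁) (h₁conv : Convex ℝ K₁) (h₁0 : (0:E2) ∈ K₁)
    (h₂ne : K₂.Nonempty) (h₂c : IsCompact K₂) (h₂conv : Convex ℝ K₂) (h₂0 : (0:E2) ∈ K₂)
    (hF : vflower 0 K₁ = vflower 0 K₂) : K₁ = K₂ :=
  Subset.antisymm (incl h₂c h₂conv h₂0 hF) (incl h₁c h₁conv h₁0 hF.symm)
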